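/- Let S ⊂ ℤ² be a finite set whose convex hull P ⊂ ℝ² is a two-dimensional polygon, and let N ≥ 3 be an integer. Suppose that the set of interior lattice points of P is exactly {(i,0) : 1 ≤ i ≤ N−1}. Then every lattice point (a,b) ∈ ℤ² lying in P satisfies b ∈ {−1, 0, 1}; that is, all lattice points of P lie on the three consecutive horizontal lines y = −1, y = 0, y = 1. -/

import Mathlib

/-- Key arithmetic step: for `b ≥ 2` there is `j ∈ [1, b-1]` with `(j*(a-1)) % b ≤ j`. -/
lemma toda_exists_j (a b : ℤ) (hb : 2 ≤ b) :
    ∃ j : ℤ, 1 ≤ j ∧ j ≤ b - 1 ∧ (j * (a - 1)) % b ≤ j := by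
  set g : ℕ := Int.gcd (a - 1) b with hg
  have hgd1 : (g : ℤ) ∣ (a - 1) := Int.gcd_dvd_left _ _
  have hgd2 : (g : ℤ) ∣ b := Int.gcd_dvd_right _ _
  have hgpos : 0 < (g : ℤ) := by
    rcases Nat.eq_zero_or_pos g with h | h
    · exfalso
      have := Int.gcd_eq_zero_iff.mp h
      omega
    · exact_mod_cast h
  by_cases hg2 : 2 ≤ (g : ℤ)
  · obtain ⟨j, hbj⟩ := hgd2
    obtain ⟨e, hae⟩ := hgd1
    have hj1 : 1 ≤ j := by nlinarith
    have hj2 : j ≤ b - 1 := by nlinarith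
    refine ⟨j, hj1, hj2, ?_⟩
    have hdvd : b ∣ j * (a - 1) := ⟨e, by rw [hae, hbj]; ring⟩
    have : (j * (a - 1)) % b = 0 := Int.emod_eq_zero_of_dvd hdvd
    omega
  · have hg1 : (g : ℤ) = 1 := by omega
    have hbez : ((g : ℤ)) = (a - 1) * Int.gcdA (a - 1) b + b * Int.gcdB (a - 1) b :=
      Int.gcd_eq_gcd_ab (a - 1) b
    have hbez' : 1 = (a - 1) * Int.gcdA (a - 1) b + b * Int.gcdB (a - 1) b := hg1 ▸ hbez
    set u := Int.gcdA (a - 1) b with hu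
    set v := Int.gcdB (a - 1) b with hv
    have hb0 : b ≠ 0 := by omega
    have hbpos : 0 < b := by omega
    have hmod : ((u % b) * (a - 1)) % b = 1 := by
      have h1 : ((u % b) * (a - 1)) % b = (u * (a - 1)) % b := by
        conv_rhs => rw [Int.mul_emod]
        conv_lhs => rw [Int.mul_emod, Int.emod_emod_of_dvd u dvd_rfl]
      have h2 : u * (a - 1) = 1 + b * (-v) := by linarith [hbez']
      rw [h1, h2, Int.add_mul_emod_self_left]
      exact Int.emod_eq_of_lt (by norm_num) (by omega)
    have hjmem : 0 ≤ u % b := Int.emod_nonneg u hb0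
    have hjlt : u % b < b := Int.emod_lt_of_pos u hbpos
    have hjne : u % b ≠ 0 := by
      intro h
      rw [h] at hmod
      simp at hmod
    refine ⟨u % b, by omega, by omega, ?_⟩
    rw [mul_comm] at hmod
    rw [mul_comm, hmod]
    omega

/-- For `b ≥ 2` there are `k ∈ [1, b-1]` and `m` with `b - k ≤ m*b - k*a ≤ 2*(b - k)`:
the lattice point `(m, k)` lies in the triangle with base `[(1,0),(2,0)]` and apex `(a,b)`. -/
lemma toda_arith (a b : ℤ) (hb : 2 ≤ b) :
    ∃ k m : ℤ, 1 ≤ k ∧ k ≤ b - 1 ∧ b - k ≤ m * b - k * a ∧ m * b - k * a ≤ 2 * (b - k) := by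
  obtain ⟨j, hj1, hj2, hjv⟩ := toda_exists_j a b hb
  refine ⟨b - j, a - (j * (a - 1)) / b, by omega, by omega, ?_, ?_⟩
  · have h := Int.mul_ediv_add_emod (j * (a - 1)) b
    have hv0 : 0 ≤ (j * (a - 1)) % b := Int.emod_nonneg _ (by omega)
    nlinarith [h]
  · have h := Int.mul_ediv_add_emod (j * (a - 1)) b
    nlinarith [h]

/-- Geometric step: if `(1,0)` and `(2,0)` are interior points of a convex set `C`,
`(x,y) ∈ C`, and `(X,Y)` is the point at parameter `t ∈ (0,1)` on a segment from a point of
the base `[(1,0),(2,0)]` to `(x,y)`, then `(X,Y)` is interior. -/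
lemma toda_geo (C : Set (ℝ × ℝ)) (hC : Convex ℝ C)
    (h1 : ((1:ℝ), (0:ℝ)) ∈ interior C) (h2 : ((2:ℝ), (0:ℝ)) ∈ interior C)
    (x y X Y t : ℝ) (hq : (x, y) ∈ C) (ht0 : 0 < t) (ht1 : t < 1)
    (hY : Y = t * y) (hX1 : 1 - t ≤ X - t * x) (hX2 : X - t * x ≤ 2 * (1 - t)) :
    (X, Y) ∈ interior C := by
  have h1t : (0:ℝ) < 1 - t := by linarith
  set x0 : ℝ := (X - t * x) / (1 - t) with hx0
  have hx0e : x0 * (1 - t) = X - t * x := div_mul_cancel₀ _ (ne_of_gt h1t)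
  have hx01 : 1 ≤ x0 := by rw [hx0, le_div_iff₀ h1t]; linarith
  have hx02 : x0 ≤ 2 := by rw [hx0, div_le_iff₀ h1t]; linarith
  have hu : ((x0 : ℝ), (0:ℝ)) ∈ interior C := by
    have h := hC.interior h1 h2 (by linarith : (0:ℝ) ≤ 2 - x0)
      (by linarith : (0:ℝ) ≤ x0 - 1) (by ring)
    convert h using 1
    simp [Prod.ext_iff, Prod.smul_def]
    ring
  have h := hC.combo_interior_self_mem_interior hu hq h1t ht0.le (by ring)
  convert h using 1
  simp [Prod.ext_iff, Prod.smul_def, hY]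
  nlinarith [hx0e]

/-- Embedding of the integer lattice `ℤ²` into the real plane `ℝ²`. -/
def latticeEmbed : ℤ × ℤ → ℝ × ℝ := fun p => ((p.1 : ℝ), (p.2 : ℝ))

/-- If the interior lattice points of a (two-dimensional) convex lattice polygon are exactly
`(1,0), …, (N-1,0)` with `N ≥ 3`, then every lattice point of the polygon lies on one of the
three horizontal lines `y = -1`, `y = 0`, `y = 1`. -/
theorem toda_polygon_three_lines (S : Finset (ℤ × ℤ)) (N : ℤ) (hN : 3 ≤ N)
    (hdim : ¬ Collinear ℝ (latticeEmbed '' (S : Set (ℤ × ℤ))))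
    (hint : {p : ℤ × ℤ |
        latticeEmbed p ∈ interior (convexHull ℝ (latticeEmbed '' (S : Set (ℤ × ℤ))))} =
      {p : ℤ × ℤ | 1 ≤ p.1 ∧ p.1 ≤ N - 1 ∧ p.2 = 0}) :
    ∀ p : ℤ × ℤ, latticeEmbed p ∈ convexHull ℝ (latticeEmbed '' (S : Set (ℤ × ℤ))) →
      p.2 = -1 ∨ p.2 = 0 ∨ p.2 = 1 := by
  set C : Set (ℝ × ℝ) := convexHull ℝ (latticeEmbed '' (S : Set (ℤ × ℤ))) with hCdef
  have hC : Convex ℝ C := convex_convexHull ℝ _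
  have hmem : ∀ p : ℤ × ℤ, (1 ≤ p.1 ∧ p.1 ≤ N - 1 ∧ p.2 = 0) → latticeEmbed p ∈ interior C := by
    intro p hp
    have : p ∈ {p : ℤ × ℤ | 1 ≤ p.1 ∧ p.1 ≤ N - 1 ∧ p.2 = 0} := hp
    rw [← hint] at this
    exact this
  have h1 : ((1:ℝ), (0:ℝ)) ∈ interior C := by
    have := hmem (1, 0) ⟨le_refl 1, by omega, rfl⟩
    simpa [latticeEmbed] using this
  have h2 : ((2:ℝ), (0:ℝ)) ∈ interior C := by
    have := hmem (2, 0) ⟨by norm_num, by omega, rfl⟩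
    simpa [latticeEmbed] using this
  have hmem' : ∀ p : ℤ × ℤ, latticeEmbed p ∈ interior C → p.2 = 0 := by
    intro p hp
    have : p ∈ {p : ℤ × ℤ | latticeEmbed p ∈ interior C} := hp
    rw [hint] at this
    exact this.2.2
  intro p hp
  obtain ⟨a, b⟩ := p
  by_contra hcon
  push_neg at hcon
  simp only at hcon ⊢
  have hb : 2 ≤ b ∨ 2 ≤ -b := by omega
  have key : ∀ b' : ℤ, 2 ≤ b' → ((b':ℝ) = b ∨ (b':ℝ) = -b) → False := by
    intro b' hb' hcases
    obtain ⟨k, m, hk1, hk2, hm1, hm2⟩ := toda_arith a b' hb'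
    have hb'0 : (0:ℝ) < (b' : ℝ) := by exact_mod_cast (by omega : (0:ℤ) < b')
    set t : ℝ := (k : ℝ) / (b' : ℝ) with ht
    have ht0 : 0 < t := by
      apply div_pos _ hb'0
      exact_mod_cast hk1
    have ht1 : t < 1 := by
      rw [ht, div_lt_one hb'0]
      exact_mod_cast (by omega : k < b')
    have hX1 : 1 - t ≤ (m : ℝ) - t * (a : ℝ) := by
      rw [ht, div_mul_eq_mul_div, sub_div' (ne_of_gt hb'0), sub_div' (ne_of_gt hb'0)]
      apply (div_le_div_iff_of_pos_right hb'0).mpr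
      have : ((b' - k : ℤ) : ℝ) ≤ ((m * b' - k * a : ℤ) : ℝ) := by exact_mod_cast hm1
      push_cast at this ⊢
      linarith
    have hX2 : (m : ℝ) - t * (a : ℝ) ≤ 2 * (1 - t) := by
      rw [ht, div_mul_eq_mul_div, sub_div' (ne_of_gt hb'0)]
      rw [show (2 : ℝ) * (1 - (k:ℝ)/(b':ℝ)) = (2 * ((b':ℝ) - (k:ℝ))) / (b':ℝ) by field_simp]
      apply (div_le_div_iff_of_pos_right hb'0).mpr
      have : ((m * b' - k * a : ℤ) : ℝ) ≤ ((2 * (b' - k) : ℤ) : ℝ) := by exact_mod_cast hm2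
      push_cast at this ⊢
      linarith
    rcases hcases with hc | hc
    · have hY : (k : ℝ) = t * (b : ℝ) := by
        rw [ht, ← hc]; field_simp
      have := toda_geo C hC h1 h2 (a : ℝ) (b : ℝ) (m : ℝ) (k : ℝ) t hp ht0 ht1 hY hX1 hX2
      have hk0 := hmem' (m, k) (by simpa [latticeEmbed] using this)
      simp at hk0
      omega
    · have hY : ((-k : ℤ) : ℝ) = t * (b : ℝ) := by
        push_cast
        rw [ht, show ((b:ℝ)) = -((b':ℝ)) from by linarith]
        field_simp
      have := toda_geo C hC h1 h2 (a : ℝ) (b : ℝ) (m : ℝ) ((-k : ℤ) : ℝ) t hp ht0 ht1 hY hX1 hX2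
      have hk0 := hmem' (m, -k) (by simpa [latticeEmbed] using this)
      simp at hk0
      omega
  rcases hb with hb | hb
  · exact key b hb (Or.inl rfl)
  · exact key (-b) hb (Or.inr (by push_cast; ring))
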